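/- arXiv:0910.1727 — 2 statements merged into one kernel-verified Lean document; each statement's English description precedes it below -/
import Mathlib

section
/- With notation as above (σ = θ·ς₁·ω^d(ς₂) with ς₁, ς₂ ∈ S_d), the pair of permutations σ, ω^d(σ) (in S_{3d}) satisfies the braid relation σ·ω^d(σ)·σ = ω^d(σ)·σ·ω^d(σ) if and only if ς₁ and ς₂ commute. -/
/-- The shift of a permutation of `ℕ` up by `d`: fixes `{0,…,d-1}` and acts as `σ`
conjugated by `k ↦ k + d` above. -/
def shift (d : ℕ) (σ : Equiv.Perm ℕ) : Equiv.Perm ℕ where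
  toFun k := if k < d then k else σ (k - d) + d
  invFun k := if k < d then k else σ⁻¹ (k - d) + d
  left_inv k := by
    by_cases h : k < d
    · simp [h]
    · dsimp only
      rw [if_neg h, if_neg (by omega), Nat.add_sub_cancel, Equiv.Perm.coe_inv, Equiv.symm_apply_apply]
      omega
  right_inv k := by
    by_cases h : k < d
    · simp [h]
    · dsimp only
      rw [if_neg h, if_neg (by omega), Nat.add_sub_cancel, Equiv.Perm.coe_inv, Equiv.apply_symm_apply]
      omega

/-- The involution of `ℕ` swapping the blocks `{0,…,d-1}` and `{d,…,2d-1}`. -/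
def theta (d : ℕ) : Equiv.Perm ℕ :=
  Function.Involutive.toPerm
    (fun k => if k < d then k + d else if k < 2 * d then k - d else k)
    (by intro k; dsimp only; split_ifs <;> omega)

lemma shift_apply (d : ℕ) (σ : Equiv.Perm ℕ) (k : ℕ) :
    shift d σ k = if k < d then k else σ (k - d) + d := rfl

lemma theta_apply (d k : ℕ) :
    theta d k = if k < d then k + d else if k < 2 * d then k - d else k := rfl

lemma fix_lt {d : ℕ} {π : Equiv.Perm ℕ} (h : ∀ k, d ≤ k → π k = k) {k : ℕ} (hk : k < d) :
    π k < d := by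
  by_contra hge
  push_neg at hge
  have h2 := h _ hge
  have := π.injective h2
  omega

/-- For `σ = θ·ς₁·ω^d(ς₂)` with `ς₁, ς₂` permutations of `{0,…,d-1}`, the pair
`σ`, `ω^d(σ)` satisfies the braid relation iff `ς₁` and `ς₂` commute. -/
theorem stmt_4 (d : ℕ) (hd : 2 ≤ d) (ς₁ ς₂ : Equiv.Perm ℕ)
    (h₁ : ∀ k, d ≤ k → ς₁ k = k) (h₂ : ∀ k, d ≤ k → ς₂ k = k)
    (σ : Equiv.Perm ℕ) (hσ : σ = theta d * ς₁ * shift d ς₂) :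
    σ * shift d σ * σ = shift d σ * σ * shift d σ ↔ ς₁ * ς₂ = ς₂ * ς₁ := by
  have f1 : ∀ k, k < d → ς₁ k < d := fun k hk => fix_lt h₁ hk
  have f2 : ∀ k, k < d → ς₂ k < d := fun k hk => fix_lt h₂ hk
  -- formulas for σ on the three blocks
  have S1 : ∀ k, k < d → σ k = ς₁ k + d := by
    intro k hk
    subst hσ
    simp only [Equiv.Perm.mul_apply, shift_apply, theta_apply]
    simp only [if_pos hk]
    rw [if_pos (f1 k hk)]
  have S2 : ∀ k, k < d → σ (k + d) = ς₂ k := by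
    intro k hk
    subst hσ
    simp only [Equiv.Perm.mul_apply, shift_apply, theta_apply]
    rw [if_neg (show ¬ k + d < d by omega), Nat.add_sub_cancel,
      h₁ _ (show d ≤ ς₂ k + d by omega),
      if_neg (show ¬ ς₂ k + d < d by omega),
      if_pos (show ς₂ k + d < 2 * d by have := f2 k hk; omega),
      Nat.add_sub_cancel]
  have S3 : ∀ k, 2 * d ≤ k → σ k = k := by
    intro k hk
    subst hσ
    simp only [Equiv.Perm.mul_apply, shift_apply, theta_apply]
    rw [if_neg (show ¬ k < d by omega), h₂ _ (show d ≤ k - d by omega),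
      (show k - d + d = k by omega), h₁ _ (show d ≤ k by omega),
      if_neg (show ¬ k < d by omega), if_neg (show ¬ k < 2 * d by omega)]
  -- formulas for shift d σ on the four blocks
  have T1 : ∀ k, k < d → shift d σ k = k := by
    intro k hk
    rw [shift_apply, if_pos hk]
  have T2 : ∀ k, k < d → shift d σ (k + d) = ς₁ k + 2 * d := by
    intro k hk
    rw [shift_apply, if_neg (show ¬ k + d < d by omega), Nat.add_sub_cancel,
      S1 k hk]
    omega
  have T3 : ∀ k, k < d → shift d σ (k + 2 * d) = ς₂ k + d := by
    intro k hk
    rw [shift_apply, if_neg (show ¬ k + 2 * d < d by omega),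
      (show k + 2 * d - d = k + d by omega), S2 k hk]
  have T4 : ∀ k, 3 * d ≤ k → shift d σ k = k := by
    intro k hk
    rw [shift_apply, if_neg (show ¬ k < d by omega), S3 _ (by omega)]
    omega
  constructor
  · intro hb
    ext k
    simp only [Equiv.Perm.mul_apply]
    rcases lt_or_ge k d with hk | hk
    · have hb' : σ (shift d σ (σ (k + d))) = shift d σ (σ (shift d σ (k + d))) := by
        have := congrArg (fun π : Equiv.Perm ℕ => π (k + d)) hb
        simpa only [Equiv.Perm.mul_apply] using this
      rw [S2 k hk, T1 _ (f2 k hk), S1 _ (f2 k hk), T2 k hk,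
        S3 _ (show 2 * d ≤ ς₁ k + 2 * d by omega), T3 _ (f1 k hk)] at hb'
      omega
    · rw [h₂ k hk, h₁ k hk, h₂ k hk]
  · intro hc
    have hc' : ∀ m, ς₁ (ς₂ m) = ς₂ (ς₁ m) := by
      intro m
      have := congrArg (fun π : Equiv.Perm ℕ => π m) hc
      simpa only [Equiv.Perm.mul_apply] using this
    ext k
    simp only [Equiv.Perm.mul_apply]
    rcases lt_or_ge k d with hk | hk
    · rw [S1 k hk, T2 _ (f1 k hk), S3 _ (show 2 * d ≤ ς₁ (ς₁ k) + 2 * d by omega),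
        T1 k hk, S1 k hk, T2 _ (f1 k hk)]
    rcases lt_or_ge k (2 * d) with hk2 | hk2
    · obtain ⟨j, rfl⟩ : ∃ j, k = j + d := ⟨k - d, by omega⟩
      have hj : j < d := by omega
      rw [S2 j hj, T1 _ (f2 j hj), S1 _ (f2 j hj),
        T2 j hj, S3 _ (show 2 * d ≤ ς₁ j + 2 * d by omega), T3 _ (f1 j hj),
        hc' j]
    rcases lt_or_ge k (3 * d) with hk3 | hk3
    · obtain ⟨j, rfl⟩ : ∃ j, k = j + 2 * d := ⟨k - 2 * d, by omega⟩
      have hj : j < d := by omega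
      rw [S3 _ (show 2 * d ≤ j + 2 * d by omega), T3 j hj,
        S2 _ (f2 j hj), T1 _ (f2 _ (f2 j hj))]
    · rw [S3 k (by omega), T4 k hk3, S3 k (by omega), T4 k hk3]
end

section
/- With σ, σ₁,...,σ_{n-1} as above and σ² = τ·ω^d(τ) for τ ∈ S_d of order q, the squares σ_s² = ω^{(s-1)d}(τ)·ω^{sd}(τ) lie in the abelian group ⟨τ⟩^{(n)} = ⟨τ⟩ × ω^d⟨τ⟩ × ... × ω^{(n-1)d}⟨τ⟩, and the conjugation identities c_{σ_{r+1}}(σ_r²) = c_{σ_r}(σ_{r+1}²) = ω^{(r-1)d}(τ)·ω^{(r+1)d}(τ) hold for r = 1,...,n-2. -/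
namespace Stmt10Aux

lemma shift_apply (d : ℕ) (σ : Equiv.Perm ℕ) (k : ℕ) :
    shift d σ k = if k < d then k else σ (k - d) + d := rfl

lemma theta_apply (d k : ℕ) :
    theta d k = if k < d then k + d else if k < 2 * d then k - d else k := rfl

lemma shift_lt {m k : ℕ} (x : Equiv.Perm ℕ) (h : k < m) : shift m x k = k := by
  rw [shift_apply, if_pos h]

lemma shift_ge {m k : ℕ} (x : Equiv.Perm ℕ) (h : m ≤ k) :
    shift m x k = x (k - m) + m := by
  rw [shift_apply, if_neg (by omega)]

lemma shift_mul (m : ℕ) (a b : Equiv.Perm ℕ) :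
    shift m (a * b) = shift m a * shift m b := by
  ext k
  by_cases h : k < m
  · rw [Equiv.Perm.mul_apply, shift_lt (a*b) h, shift_lt b h, shift_lt a h]
  · rw [Equiv.Perm.mul_apply, shift_ge (a*b) (by omega), shift_ge b (by omega),
      shift_ge a (by omega), Nat.add_sub_cancel, Equiv.Perm.mul_apply]

lemma shift_one (m : ℕ) : shift m (1 : Equiv.Perm ℕ) = 1 := by
  ext k
  by_cases h : k < m
  · rw [shift_lt 1 h]; rfl
  · rw [shift_ge 1 (by omega), Equiv.Perm.one_apply, Equiv.Perm.one_apply]; omega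

lemma shift_inv (m : ℕ) (x : Equiv.Perm ℕ) : shift m x⁻¹ = (shift m x)⁻¹ := by
  rw [eq_inv_iff_mul_eq_one, ← shift_mul, inv_mul_cancel, shift_one]

lemma shift_shift (a b : ℕ) (f : Equiv.Perm ℕ) :
    shift a (shift b f) = shift (a + b) f := by
  ext k
  by_cases h1 : k < a
  · rw [shift_lt (shift b f) h1, shift_lt f (by omega)]
  · by_cases h2 : k < a + b
    · rw [shift_ge (shift b f) (by omega), shift_lt f (show k - a < b by omega),
        shift_lt f h2]
      omega
    · rw [shift_ge (shift b f) (by omega), shift_ge f (show b ≤ k - a by omega),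
        shift_ge f (show a + b ≤ k by omega), Nat.sub_sub]
      omega

/-- fixed outside the interval `[a, b)` -/
def FixFrom (a b : ℕ) (σ : Equiv.Perm ℕ) : Prop := ∀ k, k < a ∨ b ≤ k → σ k = k

lemma FixFrom.mem {a b : ℕ} {σ : Equiv.Perm ℕ} (h : FixFrom a b σ) {k : ℕ}
    (hk : a ≤ k ∧ k < b) : a ≤ σ k ∧ σ k < b := by
  by_contra hc
  have h1 : σ (σ k) = σ k := h _ (by omega)
  have h2 := σ.injective h1
  omega

lemma FixFrom.mul {a b : ℕ} {σ π : Equiv.Perm ℕ} (h1 : FixFrom a b σ)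
    (h2 : FixFrom a b π) : FixFrom a b (σ * π) := fun k hk => by
  rw [Equiv.Perm.mul_apply, h2 k hk, h1 k hk]

lemma FixFrom.mono {a b a' b' : ℕ} {σ : Equiv.Perm ℕ} (h : FixFrom a b σ)
    (ha : a' ≤ a) (hb : b ≤ b') : FixFrom a' b' σ :=
  fun k hk => h k (by omega)

lemma commute_of_fix {a b c e : ℕ} {σ π : Equiv.Perm ℕ} (hbc : b ≤ c)
    (hσ : FixFrom a b σ) (hπ : FixFrom c e π) : σ * π = π * σ := by
  ext k
  simp only [Equiv.Perm.mul_apply]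
  by_cases hk1 : a ≤ k ∧ k < b
  · have hm := hσ.mem hk1
    have e2 : π k = k := hπ k (by omega)
    have e2' : π (σ k) = σ k := hπ _ (by omega)
    rw [e2, e2']
  · by_cases hk2 : c ≤ k ∧ k < e
    · have hm := hπ.mem hk2
      have e1 : σ k = k := hσ k (by omega)
      have e1' : σ (π k) = π k := hσ _ (by omega)
      rw [e1', e1]
    · have e1 : σ k = k := hσ k (by omega)
      have e2 : π k = k := hπ k (by omega)
      rw [e2, e1, e2]

lemma shift_fix {D m : ℕ} {x : Equiv.Perm ℕ} (hx : ∀ k, D ≤ k → x k = k) :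
    FixFrom m (m + D) (shift m x) := by
  intro k hk
  rcases hk with h | h
  · exact shift_lt x h
  · rw [shift_ge x (by omega), hx (k - m) (by omega)]; omega

lemma theta_fix (d : ℕ) : FixFrom 0 (2 * d) (theta d) := fun k hk => by
  rw [theta_apply, if_neg (by omega), if_neg (by omega)]

lemma theta_sq (d : ℕ) : theta d * theta d = 1 := by
  ext k
  simp only [Equiv.Perm.mul_apply, Equiv.Perm.one_apply, theta_apply]
  split_ifs <;> omega

lemma theta_conj {d : ℕ} {x : Equiv.Perm ℕ} (hx : ∀ k, d ≤ k → x k = k) :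
    theta d * shift d x * theta d = x := by
  have hxf : FixFrom 0 d x := fun k hk => hx k (by omega)
  ext k
  simp only [Equiv.Perm.mul_apply]
  by_cases h1 : k < d
  · have hm : x k < d := (hxf.mem (by omega)).2
    have e1 : theta d k = k + d := by rw [theta_apply, if_pos h1]
    have e2 : shift d x (k + d) = x k + d := by
      rw [shift_ge x (by omega), Nat.add_sub_cancel]
    have e3 : theta d (x k + d) = x k := by
      rw [theta_apply, if_neg (by omega), if_pos (by omega)]; omega
    rw [e1, e2, e3]
  · by_cases h2 : k < 2 * d
    · have e1 : theta d k = k - d := by rw [theta_apply, if_neg h1, if_pos h2]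
      have e2 : shift d x (k - d) = k - d := shift_lt x (by omega)
      have e3 : theta d (k - d) = k := by rw [theta_apply, if_pos (by omega)]; omega
      rw [e1, e2, e3, hx k (by omega)]
    · have e1 : theta d k = k := by rw [theta_apply, if_neg h1, if_neg h2]
      have e2 : shift d x k = k := by
        rw [shift_ge x (by omega), hx (k - d) (by omega)]; omega
      rw [e1, e2, e1, hx k (by omega)]

lemma theta_mul {d : ℕ} {x : Equiv.Perm ℕ} (hx : ∀ k, d ≤ k → x k = k) :
    theta d * x = shift d x * theta d := by
  have h := theta_conj hx
  calc theta d * x = theta d * (theta d * shift d x * theta d) := by rw [h]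
    _ = (theta d * theta d) * (shift d x * theta d) := by group
    _ = shift d x * theta d := by rw [theta_sq, one_mul]

lemma theta_mul' {d : ℕ} {x : Equiv.Perm ℕ} (hx : ∀ k, d ≤ k → x k = k) :
    theta d * shift d x = x * theta d := by
  have h := theta_conj hx
  calc theta d * shift d x = theta d * shift d x * (theta d * theta d) := by
        rw [theta_sq, mul_one]
    _ = (theta d * shift d x * theta d) * theta d := by group
    _ = x * theta d := by rw [h]

end Stmt10Aux

open Stmt10Aux in
/-- With `σ = θ·ς₁·ω^d(ς₂)`, `ς₁ς₂ = ς₂ς₁ = τ`, `σ_s = ω^{(s-1)d}(σ)`: the squares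
`σ_s² = ω^{(s-1)d}(τ)·ω^{sd}(τ)` belong to the abelian group
`⟨τ⟩^{(n)} = ⟨τ⟩ × ω^d⟨τ⟩ × ⋯ × ω^{(n-1)d}⟨τ⟩`, and
`c_{σ_{r+1}}(σ_r²) = c_{σ_r}(σ_{r+1}²) = ω^{(r-1)d}(τ)·ω^{(r+1)d}(τ)` for
`r = 1,…,n-2`. -/
theorem stmt_10 (d n : ℕ) (hd : 2 ≤ d) (hn : 3 ≤ n) (ς₁ ς₂ τ : Equiv.Perm ℕ)
    (h₁ : ∀ k, d ≤ k → ς₁ k = k) (h₂ : ∀ k, d ≤ k → ς₂ k = k)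
    (hτ : ς₁ * ς₂ = τ) (hτ' : ς₂ * ς₁ = τ)
    (σ : Equiv.Perm ℕ) (hσ : σ = theta d * ς₁ * shift d ς₂)
    (σs : ℕ → Equiv.Perm ℕ) (hσs : ∀ s, σs s = shift ((s - 1) * d) σ)
    (T : Subgroup (Equiv.Perm ℕ))
    (hT : T = Subgroup.closure {x | ∃ k < n, x ∈ Subgroup.zpowers (shift (k * d) τ)}) :
    (∀ s, 1 ≤ s → s ≤ n - 1 →
      σs s * σs s = shift ((s - 1) * d) τ * shift (s * d) τ ∧ σs s * σs s ∈ T) ∧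
      (∀ r, 1 ≤ r → r ≤ n - 2 →
        σs (r + 1) * (σs r * σs r) * (σs (r + 1))⁻¹ =
            shift ((r - 1) * d) τ * shift ((r + 1) * d) τ ∧
          σs r * (σs (r + 1) * σs (r + 1)) * (σs r)⁻¹ =
            shift ((r - 1) * d) τ * shift ((r + 1) * d) τ) := by
  have hτfix : ∀ k, d ≤ k → τ k = k := by
    intro k hk
    rw [<- hτ, Equiv.Perm.mul_apply, h₂ k hk, h₁ k hk]
  have τfix : FixFrom 0 d τ := fun k hk => hτfix k (by omega)
  have ς₁fix : FixFrom 0 d ς₁ := fun k hk => h₁ k (by omega)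
  have hσfix : FixFrom 0 (2 * d) σ := by
    rw [hσ]
    exact ((theta_fix d).mul (ς₁fix.mono (le_refl 0) (by omega))).mul
      ((shift_fix h₂).mono (by omega) (by omega))
  have hσ2 : ∀ k, 2 * d ≤ k → σ k = k := fun k hk => hσfix k (Or.inr hk)
  have hE : ς₁ * τ = τ * ς₁ := by
    conv_lhs => rw [<- hτ']
    conv_rhs => rw [<- hτ]
    group
  have hG : ς₂ * τ = τ * ς₂ := by
    conv_lhs => rw [<- hτ]
    conv_rhs => rw [<- hτ']
    group
  have hA : shift d ς₂ * theta d = theta d * ς₂ := (theta_mul h₂).symm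
  have hB : theta d * ς₁ = shift d ς₁ * theta d := theta_mul h₁
  have hC : shift d ς₁ * τ = τ * shift d ς₁ :=
    (commute_of_fix (le_refl d) τfix (shift_fix h₁)).symm
  have hD : τ * shift d ς₂ = shift d ς₂ * τ :=
    commute_of_fix (le_refl d) τfix (shift_fix h₂)
  have hF : theta d * τ = shift d τ * theta d := theta_mul hτfix
  have hH : ς₁ * shift d τ = shift d τ * ς₁ :=
    commute_of_fix (le_refl d) ς₁fix (shift_fix hτfix)
  have hI : theta d * shift d τ = τ * theta d := theta_mul' hτfix
  have L1 : σ * σ = τ * shift d τ := by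
    rw [hσ]
    calc theta d * ς₁ * shift d ς₂ * (theta d * ς₁ * shift d ς₂)
        = theta d * ς₁ * (shift d ς₂ * theta d) * ς₁ * shift d ς₂ := by group
      _ = theta d * ς₁ * (theta d * ς₂) * ς₁ * shift d ς₂ := by rw [hA]
      _ = theta d * ς₁ * theta d * (ς₂ * ς₁) * shift d ς₂ := by group
      _ = theta d * ς₁ * theta d * τ * shift d ς₂ := by rw [hτ']
      _ = shift d ς₁ * (theta d * theta d) * τ * shift d ς₂ := by rw [hB]; group
      _ = shift d ς₁ * τ * shift d ς₂ := by rw [theta_sq]; group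
      _ = τ * (shift d ς₁ * shift d ς₂) := by rw [hC]; group
      _ = τ * shift d τ := by rw [<- shift_mul, hτ]
  have L2 : σ * τ = shift d τ * σ := by
    rw [hσ]
    calc theta d * ς₁ * shift d ς₂ * τ
        = theta d * ς₁ * (shift d ς₂ * τ) := by group
      _ = theta d * (ς₁ * τ) * shift d ς₂ := by rw [<- hD]; group
      _ = theta d * τ * (ς₁ * shift d ς₂) := by rw [hE]; group
      _ = shift d τ * (theta d * ς₁ * shift d ς₂) := by rw [hF]; group
  have L3 : σ * shift d τ = τ * σ := by
    rw [hσ]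
    calc theta d * ς₁ * shift d ς₂ * shift d τ
        = theta d * ς₁ * shift d (ς₂ * τ) := by rw [shift_mul]; group
      _ = theta d * ς₁ * shift d (τ * ς₂) := by rw [hG]
      _ = theta d * (ς₁ * shift d τ) * shift d ς₂ := by rw [shift_mul]; group
      _ = theta d * shift d τ * (ς₁ * shift d ς₂) := by rw [hH]; group
      _ = τ * (theta d * ς₁ * shift d ς₂) := by rw [hI]; group
  have conj_mul : ∀ a x y : Equiv.Perm Nat,
      a * (x * y) * a⁻¹ = (a * x * a⁻¹) * (a * y * a⁻¹) := by
    intros; group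
  have hconj1 : σ * τ * σ⁻¹ = shift d τ := by rw [L2]; group
  have hcom1 : τ * shift d σ = shift d σ * τ :=
    commute_of_fix (le_refl d) τfix (shift_fix hσ2)
  have hc1 : shift d σ * τ * (shift d σ)⁻¹ = τ := by rw [<- hcom1]; group
  have hc2 : shift d σ * shift d τ * (shift d σ)⁻¹ = shift (2 * d) τ := by
    rw [<- shift_inv, <- shift_mul, <- shift_mul, hconj1, shift_shift]
    congr 1
    omega
  have L4 : shift d σ * (σ * σ) * (shift d σ)⁻¹ = τ * shift (2 * d) τ := by
    rw [L1, conj_mul, hc1, hc2]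
  have hd1 : σ * shift d τ * σ⁻¹ = τ := by rw [L3]; group
  have hcom2 : σ * shift (d + d) τ = shift (d + d) τ * σ :=
    commute_of_fix (show 2 * d ≤ d + d by omega) hσfix (shift_fix hτfix)
  have hd2 : σ * shift (d + d) τ * σ⁻¹ = shift (2 * d) τ := by
    rw [hcom2, show d + d = 2 * d from by omega]
    group
  have L5 : σ * (shift d σ * shift d σ) * σ⁻¹ = τ * shift (2 * d) τ := by
    rw [<- shift_mul, L1, shift_mul, shift_shift, conj_mul, hd1, hd2]
  have memT : ∀ k, k < n → shift (k * d) τ ∈ T := by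
    intro k hk
    rw [hT]
    exact Subgroup.subset_closure ⟨k, hk, Subgroup.mem_zpowers _⟩
  refine ⟨?_, ?_⟩
  · intro s hς₁ hς₂'
    have hsd : (s - 1) * d + d = s * d := by
      obtain ⟨t, rfl⟩ : ∃ t, s = t + 1 := ⟨s - 1, by omega⟩
      simp only [Nat.add_sub_cancel]
      ring
    have key : σs s * σs s = shift ((s - 1) * d) τ * shift (s * d) τ := by
      rw [hσs, <- shift_mul, L1, shift_mul, shift_shift, hsd]
    refine ⟨key, ?_⟩
    rw [key]
    exact mul_mem (memT (s - 1) (by omega)) (memT s (by omega))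
  · intro r hr1 hr2
    have hrd : (r - 1) * d + d = r * d := by
      obtain ⟨t, rfl⟩ : ∃ t, r = t + 1 := ⟨r - 1, by omega⟩
      simp only [Nat.add_sub_cancel]
      ring
    have hrd2 : (r - 1) * d + 2 * d = (r + 1) * d := by
      obtain ⟨t, rfl⟩ : ∃ t, r = t + 1 := ⟨r - 1, by omega⟩
      simp only [Nat.add_sub_cancel]
      ring
    have e1 : σs (r + 1) = shift ((r - 1) * d) (shift d σ) := by
      rw [hσs, shift_shift, hrd, Nat.add_sub_cancel]
    have e2 : σs r = shift ((r - 1) * d) σ := hσs r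
    constructor
    · rw [e1, e2, <- shift_inv, <- shift_mul, <- shift_mul, <- shift_mul, L4,
        shift_mul, shift_shift, hrd2]
    · rw [e1, e2, <- shift_inv, <- shift_mul, <- shift_mul, <- shift_mul, L5,
        shift_mul, shift_shift, hrd2]
end
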